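/- Let b,c be distinct vertices and a a third vertex of a Markov chain with p(b,a)=p(c,a)=1, d(b)=d(c)=1, b^{(1)}=c^{(1)}=a. Let h(v) = P_v(T_b < T_c) be the hitting probability, and suppose K_1 := 1 + (1/2) sum_{u not in {b,c}, v in V} d(u) p(u,v) |h(u)-h(v)| is finite. Then for any rotor walk started at a and any time t with n_t(b)+n_t(c) > 0, |h(a) - n_t(b)/(n_t(b)+n_t(c))| <= K_1/(n_t(b)+n_t(c)), where n_t(v) is the number of times s < t with x_s = v. -/

import Mathlib

open scoped BigOperators Classical

/-- `(x, r)` is a rotor walk for the rotor mechanism `(d, succ)`.  Rotor values are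
`0`-based: rotor value `j` at `u` means the rotor points to `succ u j`
(corresponding to `u^(j+1)` in `1`-based notation).  At each step the rotor at the
current particle position is incremented cyclically and the particle moves in the
new rotor direction. -/
def IsRotorWalk {V : Type*} (d : V → ℕ) (succ : V → ℕ → V)
    (x : ℕ → V) (r : ℕ → V → ℕ) : Prop :=
  (∀ v, r 0 v < d v) ∧
  (∀ t, r (t + 1) (x t) = (r t (x t) + 1) % d (x t)) ∧
  (∀ t v, v ≠ x t → r (t + 1) v = r t v) ∧
  (∀ t, x (t + 1) = succ (x t) (r (t + 1) (x t)))

/-- the number of visits of the walk `x` to `v` strictly before time `t` -/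
noncomputable def nvisits {V : Type*} (x : ℕ → V) (t : ℕ) (v : V) : ℕ :=
  ((Finset.range t).filter fun s => x s = v).card

/-- the rotor mechanism `(d, succ)` realizes the transition kernel `p`:
`p u v` is the proportion of the `d u` successors of `u` equal to `v` -/
def Realizes {V : Type*} (d : V → ℕ) (succ : V → ℕ → V) (p : V → V → ℝ) : Prop :=
  (∀ u, 0 < d u) ∧
  ∀ u v, p u v = ((Finset.range (d u)).filter fun i => succ u i = v).card / d u

/-- `hitAux p b c t v` is the probability, for the Markov chain with kernel `p`
started at `v`, of hitting `b` before hitting `c` and within `t` steps. -/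
noncomputable def hitAux {V : Type*} (p : V → V → ℝ) (b c : V) : ℕ → V → ℝ
  | 0, v => if v = b then 1 else 0
  | t + 1, v => if v = b then 1 else if v = c then 0 else ∑' w, p v w * hitAux p b c t w

/-- the hitting probability `h_{b,c}(v) = P_v(T_b < T_c)`, as the monotone limit of the
probabilities of hitting `b` before `c` within `t` steps.  (Taking `b = c` gives the
single-target hitting probability `P_v(T_b < ∞)`.) -/
noncomputable def hitProb {V : Type*} (p : V → V → ℝ) (b c : V) (v : V) : ℝ :=
  ⨆ t, hitAux p b c t v

/-- the escape probability `e_{u,v} = P_u(T_v < T_u^+)`: a first step from `u` to `w`,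
then hit `v` before `u`. -/
noncomputable def escProb {V : Type*} (p : V → V → ℝ) (u v : V) : ℝ :=
  ∑' w, p u w * hitProb p v u w

section helpers

variable {V : Type*}

lemma half_subset_bound {s t : Finset ℕ} (hst : s ⊆ t) (A : ℕ → ℝ)
    (h0 : ∑ j ∈ t, A j = 0) : |∑ j ∈ s, A j| ≤ (1 / 2) * ∑ j ∈ t, |A j| := by
  have hsd : ∑ j ∈ t \ s, A j + ∑ j ∈ s, A j = ∑ j ∈ t, A j := Finset.sum_sdiff hst
  have h2 : |∑ j ∈ s, A j| ≤ ∑ j ∈ s, |A j| := Finset.abs_sum_le_sum_abs _ _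
  have h3 : |∑ j ∈ s, A j| ≤ ∑ j ∈ t \ s, |A j| := by
    have hneg : ∑ j ∈ t \ s, A j = -∑ j ∈ s, A j := by linarith
    rw [← abs_neg, ← hneg]
    exact Finset.abs_sum_le_sum_abs _ _
  have h4 : ∑ j ∈ t \ s, |A j| + ∑ j ∈ s, |A j| = ∑ j ∈ t, |A j| := Finset.sum_sdiff hst
  linarith

lemma fiber_sum (d : V → ℕ) (succ : V → ℕ → V) (u : V) (W : Finset V)
    (hW : ∀ j ∈ Finset.range (d u), succ u j ∈ W) (g : V → ℝ) :
    ∑ v ∈ W, (((Finset.range (d u)).filter fun i => succ u i = v).card : ℝ) * g v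
      = ∑ j ∈ Finset.range (d u), g (succ u j) := by
  rw [← Finset.sum_fiberwise_of_maps_to hW (fun j => g (succ u j))]
  refine Finset.sum_congr rfl fun v _ => ?_
  have hconst : ∀ j ∈ (Finset.range (d u)).filter (fun i => succ u i = v),
      g (succ u j) = g v := fun j hj => by rw [(Finset.mem_filter.mp hj).2]
  rw [Finset.sum_congr rfl hconst, Finset.sum_const, nsmul_eq_mul]

lemma p_nonneg {d : V → ℕ} {succ : V → ℕ → V} {p : V → V → ℝ}
    (hreal : Realizes d succ p) (u v : V) : 0 ≤ p u v := by
  rw [hreal.2 u v]; positivity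

lemma tsum_p_mul {d : V → ℕ} {succ : V → ℕ → V} {p : V → V → ℝ}
    (hreal : Realizes d succ p) (u : V) (g : V → ℝ) :
    ∑' w, p u w * g w = (∑ j ∈ Finset.range (d u), g (succ u j)) / d u := by
  have hzero : ∀ w ∉ (Finset.range (d u)).image (succ u), p u w * g w = 0 := by
    intro w hw
    have hempty : ((Finset.range (d u)).filter fun i => succ u i = w) = ∅ := by
      rw [Finset.filter_eq_empty_iff]
      intro i hi hiw
      exact hw (Finset.mem_image.mpr ⟨i, hi, hiw⟩)
    rw [hreal.2 u w, hempty]; simp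
  rw [tsum_eq_sum hzero]
  rw [← fiber_sum d succ u ((Finset.range (d u)).image (succ u))
      (fun j hj => Finset.mem_image_of_mem _ hj) g, Finset.sum_div]
  refine Finset.sum_congr rfl fun w _ => ?_
  rw [hreal.2 u w]; ring

end helpers

section hp

variable {V : Type*} {d : V → ℕ} {succ : V → ℕ → V} {p : V → V → ℝ} {b c : V}

lemma hitAux_bounds (hreal : Realizes d succ p) :
    ∀ t (v : V), 0 ≤ hitAux p b c t v ∧ hitAux p b c t v ≤ 1 := by
  intro t
  induction t with
  | zero =>
    intro v; simp only [hitAux]; split <;> norm_num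
  | succ t ih =>
    intro v
    simp only [hitAux]
    split
    · norm_num
    split
    · norm_num
    rw [tsum_p_mul hreal v _]
    have hd : (0:ℝ) < d v := by exact_mod_cast hreal.1 v
    constructor
    · apply div_nonneg _ hd.le
      exact Finset.sum_nonneg fun j _ => (ih _).1
    · rw [div_le_one hd]
      calc ∑ j ∈ Finset.range (d v), hitAux p b c t (succ v j)
          ≤ ∑ _j ∈ Finset.range (d v), (1:ℝ) :=
            Finset.sum_le_sum fun j _ => (ih _).2
        _ = d v := by simp

lemma hitAux_succ (p : V → V → ℝ) (b c : V) (s : ℕ) (v : V) :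
    hitAux p b c (s + 1) v
      = if v = b then 1 else if v = c then 0 else ∑' w, p v w * hitAux p b c s w := rfl

lemma hitAux_mono (hreal : Realizes d succ p) :
    ∀ t (v : V), hitAux p b c t v ≤ hitAux p b c (t + 1) v := by
  intro t
  induction t with
  | zero =>
    intro v
    rw [hitAux_succ]
    simp only [hitAux]
    split
    · norm_num
    split
    · norm_num
    rw [tsum_p_mul hreal v _]
    have hd : (0:ℝ) < d v := by exact_mod_cast hreal.1 v
    apply div_nonneg _ hd.le
    refine Finset.sum_nonneg fun j _ => ?_
    exact (hitAux_bounds (b := b) (c := c) hreal 0 _).1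
  | succ t ih =>
    intro v
    rw [hitAux_succ, hitAux_succ]
    split
    · exact le_refl 1
    split
    · exact le_refl 0
    rw [tsum_p_mul hreal v _, tsum_p_mul hreal v _]
    have hd : (0:ℝ) ≤ d v := by positivity
    gcongr
    exact ih _

lemma hitProb_bounds (hreal : Realizes d succ p) (v : V) :
    0 ≤ hitProb p b c v ∧ hitProb p b c v ≤ 1 := by
  have hbdd : BddAbove (Set.range fun t => hitAux p b c t v) := by
    refine ⟨1, ?_⟩
    rintro _ ⟨s, rfl⟩
    exact (hitAux_bounds hreal s v).2
  constructor
  · exact (hitAux_bounds hreal 0 v).1.trans (le_ciSup hbdd 0)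
  · exact ciSup_le fun s => (hitAux_bounds hreal s v).2

lemma hitProb_b : hitProb p b c b = 1 := by
  have hb : ∀ s, hitAux p b c s b = 1 := by
    intro s; cases s <;> simp [hitAux]
  unfold hitProb
  simp only [hb]
  exact ciSup_const

lemma hitProb_c (hbc : b ≠ c) : hitProb p b c c = 0 := by
  have hb : ∀ s, hitAux p b c s c = 0 := by
    intro s; cases s <;> simp [hitAux, Ne.symm hbc]
  unfold hitProb
  simp only [hb]
  exact ciSup_const

lemma hitProb_harmonic (hreal : Realizes d succ p) (u : V) (hub : u ≠ b) (huc : u ≠ c) :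
    ∑ j ∈ Finset.range (d u), hitProb p b c (succ u j) = (d u : ℝ) * hitProb p b c u := by
  have hmono : ∀ v : V, Monotone fun s => hitAux p b c s v :=
    fun v => monotone_nat_of_le_succ fun s => hitAux_mono hreal s v
  have hbdd : ∀ v : V, BddAbove (Set.range fun s => hitAux p b c s v) := by
    intro v
    refine ⟨1, ?_⟩
    rintro _ ⟨s, rfl⟩
    exact (hitAux_bounds hreal s v).2
  have htend : ∀ v : V, Filter.Tendsto (fun s => hitAux p b c s v) Filter.atTop
      (nhds (hitProb p b c v)) := fun v => tendsto_atTop_ciSup (hmono v) (hbdd v)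
  have h1 : Filter.Tendsto (fun s => hitAux p b c (s + 1) u) Filter.atTop
      (nhds (hitProb p b c u)) := (htend u).comp (Filter.tendsto_add_atTop_nat 1)
  have heq : ∀ s, hitAux p b c (s + 1) u
      = (∑ j ∈ Finset.range (d u), hitAux p b c s (succ u j)) / d u := by
    intro s
    rw [hitAux_succ, if_neg hub, if_neg huc, tsum_p_mul hreal u _]
  have h2 : Filter.Tendsto
      (fun s => (∑ j ∈ Finset.range (d u), hitAux p b c s (succ u j)) / (d u : ℝ))
      Filter.atTop
      (nhds ((∑ j ∈ Finset.range (d u), hitProb p b c (succ u j)) / d u)) :=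
    (tendsto_finset_sum _ fun j _ => htend (succ u j)).div_const _
  have h3 := tendsto_nhds_unique (by simpa only [heq] using h1) h2
  have hd : (d u : ℝ) ≠ 0 := by
    have := hreal.1 u; positivity
  rw [h3]
  field_simp

end hp

section rotor

variable {V : Type*} {d : V → ℕ} {succ : V → ℕ → V} {x : ℕ → V} {r : ℕ → V → ℕ}

lemma nvisits_succ (x : ℕ → V) (t : ℕ) (v : V) :
    nvisits x (t + 1) v = nvisits x t v + if x t = v then 1 else 0 := by
  unfold nvisits
  rw [Finset.range_add_one, Finset.filter_insert]
  split
  · rw [Finset.card_insert_of_notMem (by simp)]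
  · simp

lemma rotor_inv (hwalk : IsRotorWalk d succ x r) :
    ∀ s u, r s u = (r 0 u + nvisits x s u) % d u := by
  intro s
  induction s with
  | zero =>
    intro u
    have hlt := hwalk.1 u
    simp [nvisits, Nat.mod_eq_of_lt hlt]
  | succ s ih =>
    intro u
    rw [nvisits_succ]
    by_cases hxu : x s = u
    · subst hxu
      rw [hwalk.2.1 s, ih (x s), if_pos rfl, Nat.mod_add_mod, add_assoc]
    · rw [hwalk.2.2.1 s u (fun hu => hxu hu.symm), ih u, if_neg hxu, add_zero]

lemma visit_sum (hwalk : IsRotorWalk d succ x r) (h : V → ℝ) (u : V) (t : ℕ) :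
    ∑ s ∈ (Finset.range t).filter (fun s => x s = u), (h (x (s + 1)) - h (x s))
      = ∑ m ∈ Finset.range (nvisits x t u),
          (h (succ u ((r 0 u + m + 1) % d u)) - h u) := by
  induction t with
  | zero => simp [nvisits]
  | succ t ih =>
    rw [Finset.range_add_one, Finset.filter_insert, nvisits_succ]
    by_cases hxu : x t = u
    · rw [if_pos hxu, Finset.sum_insert (by simp), ih, if_pos hxu,
        Finset.sum_range_succ]
      have hr : r (t + 1) u = (r 0 u + nvisits x t u + 1) % d u := by
        rw [rotor_inv hwalk (t + 1) u, nvisits_succ, if_pos hxu, add_assoc]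
      have hx1 : x (t + 1) = succ u ((r 0 u + nvisits x t u + 1) % d u) := by
        rw [hwalk.2.2.2 t, hxu, hr]
      rw [hx1, hxu]
      ring
    · rw [if_neg hxu, ih, if_neg hxu, add_zero]

lemma periodic_sum_bound (d : ℕ) (hd : 0 < d) (g : ℕ → ℝ)
    (hzero : ∑ j ∈ Finset.range d, g j = 0) (k n : ℕ) :
    |∑ m ∈ Finset.range n, g ((k + m) % d)| ≤ (1 / 2) * ∑ j ∈ Finset.range d, |g j| := by
  -- injectivity of m ↦ (k + m) % d on any range of length ≤ d
  have hinj : ∀ (k' : ℕ) (n' : ℕ), n' ≤ d → ∀ m₁ ∈ Finset.range n', ∀ m₂ ∈ Finset.range n',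
      (k' + m₁) % d = (k' + m₂) % d → m₁ = m₂ := by
    intro k' n' hn' m₁ hm₁ m₂ hm₂ heq
    have h1 : m₁ % d = m₂ % d := Nat.ModEq.add_left_cancel' k' heq
    rw [Nat.mod_eq_of_lt (lt_of_lt_of_le (Finset.mem_range.mp hm₁) hn'),
      Nat.mod_eq_of_lt (lt_of_lt_of_le (Finset.mem_range.mp hm₂) hn')] at h1
    exact h1
  -- full cycle sums are zero
  have hcycle : ∀ k' : ℕ, ∑ m ∈ Finset.range d, g ((k' + m) % d) = 0 := by
    intro k'
    have himg : (Finset.range d).image (fun m => (k' + m) % d) = Finset.range d := by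
      apply Finset.eq_of_subset_of_card_le
      · intro j hj
        simp only [Finset.mem_image, Finset.mem_range] at hj ⊢
        obtain ⟨m, _, rfl⟩ := hj
        exact Nat.mod_lt _ hd
      · rw [Finset.card_image_of_injOn, Finset.card_range]
        intro m₁ hm₁ m₂ hm₂ heq
        exact hinj k' d le_rfl m₁ (by simpa using hm₁) m₂ (by simpa using hm₂) heq
    calc ∑ m ∈ Finset.range d, g ((k' + m) % d)
        = ∑ j ∈ (Finset.range d).image (fun m => (k' + m) % d), g j :=
          (Finset.sum_image (hinj k' d le_rfl)).symm
      _ = ∑ j ∈ Finset.range d, g j := by rw [himg]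
      _ = 0 := hzero
  -- reduce length by d
  have hred : ∀ L : ℕ, ∑ m ∈ Finset.range (L + d), g ((k + m) % d)
      = ∑ m ∈ Finset.range L, g ((k + m) % d) := by
    intro L
    have hsplit : ∑ m ∈ Finset.range (L + d), g ((k + m) % d)
        = ∑ m ∈ Finset.range L, g ((k + m) % d)
          + ∑ m ∈ Finset.Ico L (L + d), g ((k + m) % d) := by
      rw [Finset.range_eq_Ico, Finset.range_eq_Ico, Finset.sum_Ico_consecutive]
      · omega
      · omega
    rw [hsplit, Finset.sum_Ico_eq_sum_range]
    have : ∀ i ∈ Finset.range (L + d - L), g ((k + (L + i)) % d) = g ((k + L + i) % d) := by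
      intro i _
      congr 1
      rw [add_assoc]
    rw [Finset.sum_congr rfl this]
    have : L + d - L = d := by omega
    rw [this, hcycle (k + L), add_zero]
  -- main: strong induction on n
  induction n using Nat.strong_induction_on with
  | _ n IH =>
    by_cases hnd : n < d
    · -- subset bound
      have himgsub : (Finset.range n).image (fun m => (k + m) % d) ⊆ Finset.range d := by
        intro j hj
        simp only [Finset.mem_image, Finset.mem_range] at hj ⊢
        obtain ⟨m, _, rfl⟩ := hj
        exact Nat.mod_lt _ hd
      have heqsum : ∑ m ∈ Finset.range n, g ((k + m) % d)
          = ∑ j ∈ (Finset.range n).image (fun m => (k + m) % d), g j :=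
        (Finset.sum_image (hinj k n hnd.le)).symm
      rw [heqsum]
      exact half_subset_bound himgsub g hzero
    · have hn1 : n - d + d = n := by omega
      have hlt : n - d < n := by omega
      rw [← hn1, hred (n - d)]
      exact IH (n - d) hlt

end rotor

/-- **Hitting probabilities** (Theorem `hit-prob`). -/
theorem rotor_hitting_prob {V : Type*} [Countable V]
    (d : V → ℕ) (succ : V → ℕ → V) (p : V → V → ℝ)
    (hreal : Realizes d succ p)
    (a b c : V) (hbc : b ≠ c) (hab : a ≠ b) (hac : a ≠ c)
    (hpb : p b a = 1) (hpc : p c a = 1)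
    (hdb : d b = 1) (hdc : d c = 1) (hsb : succ b 0 = a) (hsc : succ c 0 = a)
    (h : V → ℝ) (hh : h = hitProb p b c)
    (K₁ : ℝ)
    (hsum : Summable fun uv : V × V =>
      if uv.1 = b ∨ uv.1 = c then 0
      else (d uv.1 : ℝ) * p uv.1 uv.2 * |h uv.1 - h uv.2|)
    (hK₁ : K₁ = 1 + (1 / 2) * ∑' uv : V × V,
      if uv.1 = b ∨ uv.1 = c then 0
      else (d uv.1 : ℝ) * p uv.1 uv.2 * |h uv.1 - h uv.2|)
    (x : ℕ → V) (r : ℕ → V → ℕ) (hwalk : IsRotorWalk d succ x r) (hx0 : x 0 = a)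
    (t : ℕ) (hn : 0 < nvisits x t b + nvisits x t c) :
    |h a - (nvisits x t b : ℝ) / ((nvisits x t b : ℝ) + nvisits x t c)| ≤
      K₁ / ((nvisits x t b : ℝ) + nvisits x t c) := by
    -- basic facts about h
  have hd0 : ∀ u, 0 < d u := hreal.1
  have hb1 : h b = 1 := by rw [hh]; exact hitProb_b
  have hc0 : h c = 0 := by rw [hh]; exact hitProb_c hbc
  have hbound : ∀ v, 0 ≤ h v ∧ h v ≤ 1 := by rw [hh]; exact hitProb_bounds hreal
  have hharm : ∀ u, u ≠ b → u ≠ c →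
      ∑ j ∈ Finset.range (d u), (h (succ u j) - h u) = 0 := by
    intro u hub huc
    have hh2 := hitProb_harmonic (b := b) (c := c) hreal u hub huc
    rw [hh] at *
    rw [Finset.sum_sub_distrib, hh2, Finset.sum_const, Finset.card_range, nsmul_eq_mul]
    ring
  -- abbreviations
  set nb := nvisits x t b with hnbdef
  set nc := nvisits x t c with hncdef
  set F : ℕ → ℝ := fun s => h (x (s + 1)) - h (x s) with hFdef
  set U : Finset V :=
    ((Finset.range t).filter fun s => ¬(x s = b ∨ x s = c)).image x with hUdef
  set S : V → ℝ := fun u => ∑ m ∈ Finset.range (nvisits x t u),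
    (h (succ u ((r 0 u + m + 1) % d u)) - h u) with hSdef
  set C : V → ℝ := fun u => ∑ j ∈ Finset.range (d u), |h (succ u j) - h u| with hCdef
  -- telescoping
  have htel : ∑ s ∈ Finset.range t, F s = h (x t) - h a := by
    rw [hFdef]
    rw [Finset.sum_range_sub (fun s => h (x s)) t, hx0]
  -- membership facts for U
  have hU : ∀ u ∈ U, u ≠ b ∧ u ≠ c := by
    intro u hu
    obtain ⟨s, hs, rfl⟩ := Finset.mem_image.mp hu
    have h2 := (Finset.mem_filter.mp hs).2
    push_neg at h2
    exact h2
  -- split of the sum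
  have hdisj : Disjoint ((Finset.range t).filter fun s => x s = b)
      ((Finset.range t).filter fun s => x s = c) := by
    refine Finset.disjoint_left.mpr fun s hs1 hs2 => ?_
    exact hbc (((Finset.mem_filter.mp hs1).2).symm.trans (Finset.mem_filter.mp hs2).2)
  have hsplit : ∑ s ∈ Finset.range t, F s
      = ∑ s ∈ (Finset.range t).filter (fun s => x s = b), F s
        + ∑ s ∈ (Finset.range t).filter (fun s => x s = c), F s
        + ∑ s ∈ (Finset.range t).filter (fun s => ¬(x s = b ∨ x s = c)), F s := by
    rw [← Finset.sum_filter_add_sum_filter_not (Finset.range t)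
      (fun s => x s = b ∨ x s = c) F]
    congr 1
    rw [Finset.filter_or, Finset.sum_union hdisj]
  -- sums over b and c visits
  have hxb : ∀ s, x s = b → x (s + 1) = a := by
    intro s hs
    have hrb : r (s + 1) b = 0 := by
      rw [rotor_inv hwalk, hdb, Nat.mod_one]
    rw [hwalk.2.2.2 s, hs, hrb, hsb]
  have hxc : ∀ s, x s = c → x (s + 1) = a := by
    intro s hs
    have hrc : r (s + 1) c = 0 := by
      rw [rotor_inv hwalk, hdc, Nat.mod_one]
    rw [hwalk.2.2.2 s, hs, hrc, hsc]
  have hsumb : ∑ s ∈ (Finset.range t).filter (fun s => x s = b), F s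
      = (nb : ℝ) * (h a - 1) := by
    have hterm : ∀ s ∈ (Finset.range t).filter (fun s => x s = b), F s = h a - 1 := by
      intro s hs
      have hxs := (Finset.mem_filter.mp hs).2
      rw [hFdef]
      simp only
      rw [hxb s hxs, hxs, hb1]
    have hcard : (Finset.filter (fun s => x s = b) (Finset.range t)).card = nb := rfl
    rw [Finset.sum_congr rfl hterm, Finset.sum_const, nsmul_eq_mul, hcard]
  have hsumc : ∑ s ∈ (Finset.range t).filter (fun s => x s = c), F s
      = (nc : ℝ) * h a := by
    have hterm : ∀ s ∈ (Finset.range t).filter (fun s => x s = c), F s = h a := by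
      intro s hs
      have hxs := (Finset.mem_filter.mp hs).2
      rw [hFdef]
      simp only
      rw [hxc s hxs, hxs, hc0, sub_zero]
    have hcard : (Finset.filter (fun s => x s = c) (Finset.range t)).card = nc := rfl
    rw [Finset.sum_congr rfl hterm, Finset.sum_const, nsmul_eq_mul, hcard]
  -- sum over other visits, grouped by vertex
  have hmaps : ∀ s ∈ (Finset.range t).filter (fun s => ¬(x s = b ∨ x s = c)), x s ∈ U :=
    fun s hs => Finset.mem_image_of_mem x hs
  have hsumo : ∑ s ∈ (Finset.range t).filter (fun s => ¬(x s = b ∨ x s = c)), F s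
      = ∑ u ∈ U, S u := by
    rw [← Finset.sum_fiberwise_of_maps_to hmaps F]
    refine Finset.sum_congr rfl fun u hu => ?_
    have hfil : ((Finset.range t).filter fun s => ¬(x s = b ∨ x s = c)).filter
        (fun s => x s = u) = (Finset.range t).filter fun s => x s = u := by
      rw [Finset.filter_filter]
      refine Finset.filter_congr fun s _ => ?_
      constructor
      · exact And.right
      · intro hxu
        refine ⟨?_, hxu⟩
        rw [hxu]
        rintro (h2 | h2)
        · exact (hU u hu).1 h2
        · exact (hU u hu).2 h2
    rw [hfil, hSdef]
    exact visit_sum hwalk h u t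
  -- bound on each S u
  have hSbound : ∀ u ∈ U, |S u| ≤ (1 / 2) * C u := by
    intro u hu
    have hrw : S u = ∑ m ∈ Finset.range (nvisits x t u),
        (fun j => h (succ u j) - h u) ((r 0 u + 1 + m) % d u) := by
      rw [hSdef]
      refine Finset.sum_congr rfl fun m _ => ?_
      have : r 0 u + m + 1 = r 0 u + 1 + m := by omega
      rw [this]
    rw [hrw]
    exact periodic_sum_bound (d u) (hd0 u) _ (hharm u (hU u hu).1 (hU u hu).2) _ _
  -- key identity
  have hkey : ((nb : ℝ) + nc) * h a - nb = (h (x t) - h a) - ∑ u ∈ U, S u := by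
    have h9 := htel
    rw [hsplit, hsumb, hsumc, hsumo] at h9
    linarith [h9]
  -- bound |h (x t) - h a| ≤ 1
  have habs1 : |h (x t) - h a| ≤ 1 := by
    rw [abs_le]
    constructor
    · linarith [(hbound (x t)).1, (hbound a).2]
    · linarith [(hbound (x t)).2, (hbound a).1]
  -- bound of the finset sum of C by the tsum
  set f : V × V → ℝ := fun uv => if uv.1 = b ∨ uv.1 = c then 0
      else (d uv.1 : ℝ) * p uv.1 uv.2 * |h uv.1 - h uv.2| with hfdef
  have hf0 : ∀ uv : V × V, 0 ≤ f uv := by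
    intro uv
    rw [hfdef]
    simp only
    split
    · exact le_refl 0
    · have := p_nonneg hreal uv.1 uv.2
      positivity
  set W : Finset V := U.biUnion (fun u => (Finset.range (d u)).image (succ u)) with hWdef
  have hCsum : ∑ u ∈ U, C u ≤ ∑' uv : V × V, f uv := by
    have hCW : ∀ u ∈ U, C u = ∑ v ∈ W, f (u, v) := by
      intro u hu
      have hdu : (d u : ℝ) ≠ 0 := by
        have := hd0 u; positivity
      have h1 : ∀ v ∈ W, f (u, v)
          = (((Finset.range (d u)).filter fun i => succ u i = v).card : ℝ) * |h u - h v| := by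
        intro v _
        rw [hfdef]
        simp only
        rw [if_neg (by push_neg; exact hU u hu), hreal.2 u v]
        field_simp
      have hWmem : ∀ j ∈ Finset.range (d u), succ u j ∈ W := fun j hj =>
        Finset.mem_biUnion.mpr ⟨u, hu, Finset.mem_image_of_mem _ hj⟩
      rw [Finset.sum_congr rfl h1, fiber_sum d succ u W hWmem (fun v => |h u - h v|), hCdef]
      exact Finset.sum_congr rfl fun j _ => by rw [abs_sub_comm]
    calc ∑ u ∈ U, C u = ∑ u ∈ U, ∑ v ∈ W, f (u, v) := Finset.sum_congr rfl hCW
      _ = ∑ uv ∈ U ×ˢ W, f uv := (Finset.sum_product (s := U) (t := W) (f := f)).symm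
      _ ≤ ∑' uv : V × V, f uv := Summable.sum_le_tsum _ (fun uv _ => hf0 uv) hsum
  -- main bound
  have hmain : |((nb : ℝ) + nc) * h a - nb| ≤ K₁ := by
    have h5 : |∑ u ∈ U, S u| ≤ ∑ u ∈ U, (1 / 2) * C u :=
      (Finset.abs_sum_le_sum_abs _ _).trans (Finset.sum_le_sum hSbound)
    have h6 : ∑ u ∈ U, (1 / 2) * C u = (1 / 2) * ∑ u ∈ U, C u := by
      rw [Finset.mul_sum]
    have h7 : |(h (x t) - h a) - ∑ u ∈ U, S u|
        ≤ |h (x t) - h a| + |∑ u ∈ U, S u| := by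
      rw [sub_eq_add_neg]
      exact (abs_add_le _ _).trans (by rw [abs_neg])
    rw [hkey, hK₁]
    have h8 : (1 / 2) * ∑ u ∈ U, C u ≤ (1 / 2) * ∑' uv : V × V, f uv := by
      linarith [hCsum]
    calc |(h (x t) - h a) - ∑ u ∈ U, S u| ≤ |h (x t) - h a| + |∑ u ∈ U, S u| := h7
      _ ≤ 1 + (1 / 2) * ∑ u ∈ U, C u := by linarith [h5, h6, habs1]
      _ ≤ 1 + (1 / 2) * ∑' uv : V × V, f uv := by linarith [h8]
  -- conclude by division
  have hN : (0 : ℝ) < (nb : ℝ) + nc := by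
    have : (0 : ℕ) < nb + nc := hn
    exact_mod_cast this
  have heq2 : h a - (nb : ℝ) / ((nb : ℝ) + nc)
      = (((nb : ℝ) + nc) * h a - nb) / ((nb : ℝ) + nc) := by
    field_simp
  rw [heq2, abs_div, abs_of_pos hN]
  gcongr
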